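/- Assume H is connected and ∑_{v∈V} s_v = 0. Then there exists f∈ℝ^{A↑} with 0 ≤ f_a ≤ ‖s‖₁ for every arc a∈A↑ and A↑f = b↑, where ‖s‖₁ = ∑_{v∈V} |s_v|. -/

import Mathlib

open Finset

section

variable {V : Type*} [Fintype V] [DecidableEq V] [Nonempty V]
variable {E : Type*} [Fintype E]

/-- The ℓ¹ norm on ℝ^V. -/
def l1norm (x : V → ℝ) : ℝ := ∑ v, |x v|

/-- Connectivity of the hypergraph. -/
def HConn (edge : E → Finset V) : Prop :=
  ∀ u v : V, ∃ (k : ℕ) (p : Fin (k + 1) → V) (c : Fin k → E),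
    p 0 = u ∧ p (Fin.last k) = v ∧
    ∀ i : Fin k, p i.castSucc ∈ edge (c i) ∧ p i.succ ∈ edge (c i)

/-- Net flow (incoming minus outgoing) of a lifted flow at an original vertex `v`. -/
noncomputable def incV (edge : E → Finset V) (fp fn : E → V → ℝ) (v : V) : ℝ :=
  (∑ e ∈ univ.filter (fun e => v ∈ edge e), fp e v)
    - ∑ e ∈ univ.filter (fun e => v ∈ edge e), fn e v

/-- Net flow at the node `e⁺`. -/
noncomputable def incP (edge : E → Finset V) (fp : E → V → ℝ) (fq : E → ℝ) (e : E) : ℝ :=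
  fq e - ∑ v ∈ edge e, fp e v

/-- Net flow at the node `e⁻`. -/
noncomputable def incM (edge : E → Finset V) (fn : E → V → ℝ) (fq : E → ℝ) (e : E) : ℝ :=
  (∑ v ∈ edge e, fn e v) - fq e

set_option linter.unusedSectionVars false

attribute [local instance] Classical.propDecidable

namespace Stmt7Aux

variable (edge : E → Finset V)

/-- A walk from `u` to `v` as a list of steps `(a, e, b)`. -/
def IsWalk : V → V → List (V × E × V) → Prop
  | u, v, [] => u = v
  | u, v, (a, e, b) :: L => u = a ∧ a ∈ edge e ∧ b ∈ edge e ∧ IsWalk b v L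

variable {edge}

theorem isWalk_append {L₁ L₂ : List (V × E × V)} {u v : V}
    (h : IsWalk edge u v (L₁ ++ L₂)) : ∃ m, IsWalk edge u m L₁ ∧ IsWalk edge m v L₂ := by
  induction L₁ generalizing u with
  | nil => exact ⟨u, rfl, h⟩
  | cons st L ih =>
    obtain ⟨a, e, b⟩ := st
    obtain ⟨h1, h2, h3, h4⟩ := h
    obtain ⟨m, hm1, hm2⟩ := ih h4
    exact ⟨m, ⟨h1, h2, h3, hm1⟩, hm2⟩

theorem IsWalk.append {L₁ L₂ : List (V × E × V)} {u m v : V}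
    (h1 : IsWalk edge u m L₁) (h2 : IsWalk edge m v L₂) : IsWalk edge u v (L₁ ++ L₂) := by
  induction L₁ generalizing u with
  | nil => cases h1; exact h2
  | cons st L ih =>
    obtain ⟨a, e, b⟩ := st
    obtain ⟨ha, hb, hc, hd⟩ := h1
    exact ⟨ha, hb, hc, ih hd⟩

theorem not_nodup_map {α β : Type*} (f : α → β) :
    ∀ L : List α, ¬ (L.map f).Nodup →
      ∃ (L₁ : List α) (s : α) (L₂ : List α) (s' : α) (L₃ : List α),
        L = L₁ ++ s :: (L₂ ++ s' :: L₃) ∧ f s = f s' := by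
  intro L
  induction L with
  | nil => intro h; simp at h
  | cons a L ih =>
    intro h
    rw [List.map_cons, List.nodup_cons] at h
    push_neg at h
    by_cases hmem : f a ∈ L.map f
    · obtain ⟨s', hs', hfs⟩ := List.mem_map.mp hmem
      obtain ⟨L₂, L₃, rfl⟩ := List.append_of_mem hs'
      exact ⟨[], a, L₂, s', L₃, by simp, hfs.symm⟩
    · obtain ⟨L₁, s, L₂, s', L₃, rfl, hfs⟩ := ih (h hmem)
      exact ⟨a :: L₁, s, L₂, s', L₃, by simp, hfs⟩

/-- A walk can be shortened to one using each edge at most once. -/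
theorem exists_nodup_walk {u v : V} {L : List (V × E × V)} (h : IsWalk edge u v L) :
    ∃ L', IsWalk edge u v L' ∧ (L'.map (fun st => st.2.1)).Nodup := by
  obtain ⟨n, hn⟩ : ∃ n, L.length ≤ n := ⟨L.length, le_rfl⟩
  induction n generalizing L with
  | zero =>
    rw [Nat.le_zero, List.length_eq_zero_iff] at hn
    subst hn
    exact ⟨[], h, by simp⟩
  | succ n ih =>
    by_cases hd : (L.map (fun st => st.2.1)).Nodup
    · exact ⟨L, h, hd⟩
    · obtain ⟨L₁, ⟨a, e, b⟩, L₂, ⟨a', e', b'⟩, L₃, rfl, hfs⟩ := not_nodup_map _ L hd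
      simp only at hfs
      subst hfs
      obtain ⟨m, hm1, hm2⟩ := isWalk_append h
      obtain ⟨h1, h2, h3, h4⟩ := hm2
      obtain ⟨m', hm3, hm4⟩ := isWalk_append h4
      obtain ⟨h5, h6, h7, h8⟩ := hm4
      have hw : IsWalk edge u v (L₁ ++ (a, e, b') :: L₃) :=
        hm1.append ⟨h1, h2, h7, h8⟩
      apply ih hw
      have := List.length_append (as := L₁) (bs := ((a, e, b) :: (L₂ ++ (a, e, b') :: L₃)))
      simp only [List.length_append, List.length_cons] at hn ⊢
      omega

/-- Connectivity gives a walk between any two vertices. -/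
theorem exists_walk (hconn : HConn edge) (u v : V) :
    ∃ L, IsWalk edge u v L ∧ (L.map (fun st => st.2.1)).Nodup := by
  obtain ⟨k, p, c, hp0, hpl, hpc⟩ := hconn u v
  suffices h : ∀ (k : ℕ) (p : Fin (k + 1) → V) (c : Fin k → E),
      (∀ i : Fin k, p i.castSucc ∈ edge (c i) ∧ p i.succ ∈ edge (c i)) →
      ∃ L, IsWalk edge (p 0) (p (Fin.last k)) L by
    obtain ⟨L, hL⟩ := h k p c hpc
    rw [hp0, hpl] at hL
    exact exists_nodup_walk hL
  intro k
  induction k with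
  | zero => intro p c _; exact ⟨[], rfl⟩
  | succ k ih =>
    intro p c hpc
    obtain ⟨L, hL⟩ := ih (p ∘ Fin.succ) (c ∘ Fin.succ) (fun i => by
      constructor
      · have := (hpc i.succ).1
        rw [Function.comp_apply, Function.comp_apply, Fin.succ_castSucc]; exact this
      · exact (hpc i.succ).2)
    refine ⟨(p 0, c 0, p 1) :: L, rfl, ?_, ?_, ?_⟩
    · simpa using (hpc 0).1
    · simpa using (hpc 0).2
    · have h1 : (p ∘ Fin.succ) 0 = p 1 := by simp
      have h2 : (p ∘ Fin.succ) (Fin.last k) = p (Fin.last (k + 1)) := by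
        simp [Fin.succ_last]
      rw [h1, h2] at hL
      exact hL

/-- Number of steps of `L` using edge `e` and leaving vertex `x`. -/
noncomputable def cntN (L : List (V × E × V)) (e : E) (x : V) : ℕ :=
  L.countP (fun st => st.2.1 = e ∧ st.1 = x)

/-- Number of steps of `L` using edge `e` and entering vertex `x`. -/
noncomputable def cntP (L : List (V × E × V)) (e : E) (x : V) : ℕ :=
  L.countP (fun st => st.2.1 = e ∧ st.2.2 = x)

/-- Number of steps of `L` using edge `e`. -/
noncomputable def cntQ (L : List (V × E × V)) (e : E) : ℕ :=
  L.countP (fun st => st.2.1 = e)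

theorem cntN_le_cntQ (L : List (V × E × V)) (e : E) (x : V) : cntN L e x ≤ cntQ L e :=
  List.countP_mono_left (fun st _ h => by
    simp only [decide_eq_true_eq] at h ⊢; exact h.1)

theorem cntP_le_cntQ (L : List (V × E × V)) (e : E) (x : V) : cntP L e x ≤ cntQ L e :=
  List.countP_mono_left (fun st _ h => by
    simp only [decide_eq_true_eq] at h ⊢; exact h.1)

theorem cntQ_le_one {L : List (V × E × V)} (hd : (L.map (fun st => st.2.1)).Nodup) (e : E) :
    cntQ L e ≤ 1 := by
  induction L with
  | nil => simp [cntQ]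
  | cons st L ih =>
    obtain ⟨a, e', b⟩ := st
    rw [List.map_cons, List.nodup_cons] at hd
    obtain ⟨hmem, hnd⟩ := hd
    simp only [cntQ, List.countP_cons, decide_eq_true_eq] at ih ⊢
    by_cases he : e' = e
    · subst he
      have hz : L.countP (fun st => decide (st.2.1 = e')) = 0 := by
        rw [List.countP_eq_zero]
        intro st hst hc
        simp only [decide_eq_true_eq] at hc
        exact hmem (List.mem_map.mpr ⟨st, hst, hc⟩)
      simp [hz]
    · simpa [he] using ih hnd

theorem step_mem {u v : V} {L : List (V × E × V)} (h : IsWalk edge u v L) :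
    ∀ st ∈ L, st.1 ∈ edge st.2.1 ∧ st.2.2 ∈ edge st.2.1 := by
  induction L generalizing u with
  | nil => simp
  | cons st L ih =>
    obtain ⟨a, e, b⟩ := st
    obtain ⟨rfl, h2, h3, h4⟩ := h
    intro st hst
    rcases List.mem_cons.mp hst with rfl | hst
    · exact ⟨h2, h3⟩
    · exact ih h4 st hst

theorem cntN_eq_zero {u v : V} {L : List (V × E × V)} (h : IsWalk edge u v L)
    {e : E} {x : V} (hx : x ∉ edge e) : cntN L e x = 0 := by
  rw [cntN, List.countP_eq_zero]
  rintro ⟨a, e', b⟩ hst hc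
  simp only [decide_eq_true_eq] at hc
  obtain ⟨rfl, rfl⟩ := hc
  exact hx (step_mem h _ hst).1

theorem cntP_eq_zero {u v : V} {L : List (V × E × V)} (h : IsWalk edge u v L)
    {e : E} {x : V} (hx : x ∉ edge e) : cntP L e x = 0 := by
  rw [cntP, List.countP_eq_zero]
  rintro ⟨a, e', b⟩ hst hc
  simp only [decide_eq_true_eq] at hc
  obtain ⟨rfl, rfl⟩ := hc
  exact hx (step_mem h _ hst).2

theorem sum_cntN {u v : V} {L : List (V × E × V)} (h : IsWalk edge u v L) (e : E) :
    ∑ x ∈ edge e, cntN L e x = cntQ L e := by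
  induction L generalizing u with
  | nil => simp [cntN, cntQ]
  | cons st L ih =>
    obtain ⟨a, e', b⟩ := st
    obtain ⟨rfl, h2, h3, h4⟩ := h
    simp only [cntN, cntQ, List.countP_cons, decide_eq_true_eq] at *
    rw [Finset.sum_add_distrib, ih h4]
    congr 1
    by_cases he : e' = e
    · subst he
      rw [Finset.sum_eq_single u]
      · simp
      · intro x _ hxa; simp [Ne.symm hxa]
      · intro ha; exact absurd h2 ha
    · simp [he]

theorem sum_cntP {u v : V} {L : List (V × E × V)} (h : IsWalk edge u v L) (e : E) :
    ∑ x ∈ edge e, cntP L e x = cntQ L e := by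
  induction L generalizing u with
  | nil => simp [cntP, cntQ]
  | cons st L ih =>
    obtain ⟨a, e', b⟩ := st
    obtain ⟨rfl, h2, h3, h4⟩ := h
    simp only [cntP, cntQ, List.countP_cons, decide_eq_true_eq] at *
    rw [Finset.sum_add_distrib, ih h4]
    congr 1
    by_cases he : e' = e
    · subst he
      rw [Finset.sum_eq_single b]
      · simp
      · intro x _ hxb; simp [Ne.symm hxb]
      · intro hb; exact absurd h3 hb
    · simp [he]

theorem sum_cntN_univ (L : List (V × E × V)) (x : V) :
    ∑ e : E, cntN L e x = L.countP (fun st => st.1 = x) := by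
  induction L with
  | nil => simp [cntN]
  | cons st L ih =>
    obtain ⟨a, e', b⟩ := st
    simp only [cntN, List.countP_cons, decide_eq_true_eq] at *
    rw [Finset.sum_add_distrib, ih]
    congr 1
    by_cases hax : a = x
    · subst hax
      rw [Finset.sum_eq_single e']
      · simp
      · intro x _ hx; simp [Ne.symm hx]
      · intro h; exact absurd (Finset.mem_univ e') h
    · simp [hax]

theorem sum_cntP_univ (L : List (V × E × V)) (x : V) :
    ∑ e : E, cntP L e x = L.countP (fun st => st.2.2 = x) := by
  induction L with
  | nil => simp [cntP]
  | cons st L ih =>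
    obtain ⟨a, e', b⟩ := st
    simp only [cntP, List.countP_cons, decide_eq_true_eq] at *
    rw [Finset.sum_add_distrib, ih]
    congr 1
    by_cases hbx : b = x
    · subst hbx
      rw [Finset.sum_eq_single e']
      · simp
      · intro x _ hx; simp [Ne.symm hx]
      · intro h; exact absurd (Finset.mem_univ e') h
    · simp [hbx]

theorem telescope {u v : V} {L : List (V × E × V)} (h : IsWalk edge u v L) (x : V) :
    L.countP (fun st => st.2.2 = x) + (if u = x then 1 else 0)
      = L.countP (fun st => st.1 = x) + (if v = x then 1 else 0) := by
  induction L generalizing u with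
  | nil => cases h; rfl
  | cons st L ih =>
    obtain ⟨a, e', b⟩ := st
    obtain ⟨rfl, h2, h3, h4⟩ := h
    have := ih h4
    simp only [List.countP_cons, decide_eq_true_eq]
    split_ifs at this ⊢ <;> omega


end Stmt7Aux

open Stmt7Aux in
theorem stmt7 (edge : E → Finset V) (hne : ∀ e, (edge e).Nonempty)
    (w : E → ℝ) (hw : ∀ e, 0 < w e) (s : V → ℝ)
    (hconn : HConn edge) (hs : ∑ v, s v = 0) :
    ∃ (fp fn : E → V → ℝ) (fq : E → ℝ),
      (∀ e, ∀ v ∈ edge e, 0 ≤ fp e v ∧ fp e v ≤ l1norm s) ∧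
      (∀ e, ∀ v ∈ edge e, 0 ≤ fn e v ∧ fn e v ≤ l1norm s) ∧
      (∀ e, 0 ≤ fq e ∧ fq e ≤ l1norm s) ∧
      (∀ v, incV edge fp fn v = s v) ∧
      (∀ e, incP edge fp fq e = 0) ∧
      (∀ e, incM edge fn fq e = 0) := by
  classical
  obtain ⟨r⟩ := ‹Nonempty V›
  choose W hW hWnd using fun t => Stmt7Aux.exists_walk hconn r t
  open Stmt7Aux in
  have hle1 : ∀ (t : V) (e : E) (x : V),
      (cntN (W t) e x : ℝ) ≤ 1 ∧ (cntP (W t) e x : ℝ) ≤ 1 ∧ (cntQ (W t) e : ℝ) ≤ 1 := by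
    intro t e x
    have hq := cntQ_le_one (hWnd t) e
    have h1 := (cntN_le_cntQ (W t) e x).trans hq
    have h2 := (cntP_le_cntQ (W t) e x).trans hq
    exact ⟨by exact_mod_cast h1, by exact_mod_cast h2, by exact_mod_cast hq⟩
  refine ⟨fun e x => ∑ t, |s t| *
      (if 0 ≤ s t then (cntP (W t) e x : ℝ) else (cntN (W t) e x : ℝ)),
    fun e x => ∑ t, |s t| *
      (if 0 ≤ s t then (cntN (W t) e x : ℝ) else (cntP (W t) e x : ℝ)),
    fun e => ∑ t, |s t| * (cntQ (W t) e : ℝ), ?_, ?_, ?_, ?_, ?_, ?_⟩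
  · intro e v _
    constructor
    · apply Finset.sum_nonneg
      intro t _
      exact mul_nonneg (abs_nonneg _) (by split_ifs <;> positivity)
    · rw [l1norm]
      apply Finset.sum_le_sum
      intro t _
      calc |s t| * (if 0 ≤ s t then (cntP (W t) e v : ℝ) else (cntN (W t) e v : ℝ))
          ≤ |s t| * 1 := by
            apply mul_le_mul_of_nonneg_left _ (abs_nonneg _)
            split_ifs
            exacts [(hle1 t e v).2.1, (hle1 t e v).1]
        _ = |s t| := mul_one _
  · intro e v _
    constructor
    · apply Finset.sum_nonneg
      intro t _
      exact mul_nonneg (abs_nonneg _) (by split_ifs <;> positivity)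
    · rw [l1norm]
      apply Finset.sum_le_sum
      intro t _
      calc |s t| * (if 0 ≤ s t then (cntN (W t) e v : ℝ) else (cntP (W t) e v : ℝ))
          ≤ |s t| * 1 := by
            apply mul_le_mul_of_nonneg_left _ (abs_nonneg _)
            split_ifs
            exacts [(hle1 t e v).1, (hle1 t e v).2.1]
        _ = |s t| := mul_one _
  · intro e
    constructor
    · apply Finset.sum_nonneg
      intro t _
      exact mul_nonneg (abs_nonneg _) (by positivity)
    · rw [l1norm]
      apply Finset.sum_le_sum
      intro t _
      calc |s t| * (cntQ (W t) e : ℝ) ≤ |s t| * 1 :=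
            mul_le_mul_of_nonneg_left (hle1 t e r).2.2 (abs_nonneg _)
        _ = |s t| := mul_one _
  · intro v
    rw [incV]
    have hzero : ∀ (g : E → ℝ), (∀ e, v ∉ edge e → g e = 0) →
        ∑ e ∈ univ.filter (fun e => v ∈ edge e), g e = ∑ e, g e := by
      intro g hg
      rw [Finset.sum_filter]
      refine Finset.sum_congr rfl fun e _ => ?_
      by_cases h : v ∈ edge e
      · rw [if_pos h]
      · rw [if_neg h, hg e h]
    have h1 : ∑ e ∈ univ.filter (fun e => v ∈ edge e),
        (∑ t, |s t| * (if 0 ≤ s t then (cntP (W t) e v : ℝ) else (cntN (W t) e v : ℝ)))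
        = ∑ t, |s t| * (if 0 ≤ s t then ((W t).countP (fun st => st.2.2 = v) : ℝ)
            else ((W t).countP (fun st => st.1 = v) : ℝ)) := by
      rw [hzero _ (fun e he => Finset.sum_eq_zero fun t _ => by
        rw [cntP_eq_zero (hW t) he, cntN_eq_zero (hW t) he]; simp)]
      rw [Finset.sum_comm]
      refine Finset.sum_congr rfl fun t _ => ?_
      rw [← Finset.mul_sum]
      congr 1
      split_ifs
      · rw [← Nat.cast_sum, sum_cntP_univ]
      · rw [← Nat.cast_sum, sum_cntN_univ]
    have h2 : ∑ e ∈ univ.filter (fun e => v ∈ edge e),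
        (∑ t, |s t| * (if 0 ≤ s t then (cntN (W t) e v : ℝ) else (cntP (W t) e v : ℝ)))
        = ∑ t, |s t| * (if 0 ≤ s t then ((W t).countP (fun st => st.1 = v) : ℝ)
            else ((W t).countP (fun st => st.2.2 = v) : ℝ)) := by
      rw [hzero _ (fun e he => Finset.sum_eq_zero fun t _ => by
        rw [cntP_eq_zero (hW t) he, cntN_eq_zero (hW t) he]; simp)]
      rw [Finset.sum_comm]
      refine Finset.sum_congr rfl fun t _ => ?_
      rw [← Finset.mul_sum]
      congr 1
      split_ifs
      · rw [← Nat.cast_sum, sum_cntN_univ]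
      · rw [← Nat.cast_sum, sum_cntP_univ]
    rw [h1, h2, ← Finset.sum_sub_distrib]
    have hterm : ∀ t,
        |s t| * (if 0 ≤ s t then ((W t).countP (fun st => st.2.2 = v) : ℝ)
            else ((W t).countP (fun st => st.1 = v) : ℝ))
        - |s t| * (if 0 ≤ s t then ((W t).countP (fun st => st.1 = v) : ℝ)
            else ((W t).countP (fun st => st.2.2 = v) : ℝ))
        = s t * ((if t = v then 1 else 0) - (if r = v then 1 else 0)) := by
      intro t
      have htel := telescope (hW t) v
      have htelR : ((W t).countP (fun st => st.2.2 = v) : ℝ)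
          - ((W t).countP (fun st => st.1 = v) : ℝ)
          = (if t = v then 1 else 0) - (if r = v then 1 else 0) := by
        split_ifs at htel ⊢
        · have h' : (W t).countP (fun st => st.2.2 = v)
              = (W t).countP (fun st => st.1 = v) := by omega
          rw [h']; ring
        · have h' : (W t).countP (fun st => st.2.2 = v)
              = (W t).countP (fun st => st.1 = v) + 1 := by omega
          rw [h']; push_cast; ring
        · have h' : (W t).countP (fun st => st.2.2 = v) + 1
              = (W t).countP (fun st => st.1 = v) := by omega
          rw [← h']; push_cast; ring
        · have h' : (W t).countP (fun st => st.2.2 = v)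
              = (W t).countP (fun st => st.1 = v) := by omega
          rw [h']; ring
      rcases le_or_gt 0 (s t) with h | h
      · rw [if_pos h, if_pos h, abs_of_nonneg h, ← mul_sub, htelR]
      · rw [if_neg (not_le.mpr h), if_neg (not_le.mpr h), abs_of_neg h, ← htelR]
        ring
    rw [Finset.sum_congr rfl fun t _ => hterm t]
    simp only [mul_sub]
    rw [Finset.sum_sub_distrib]
    have ha : ∑ t, s t * (if t = v then 1 else 0) = s v := by
      simp [mul_ite, mul_one, mul_zero, Finset.sum_ite_eq']
    have hb : ∑ t, s t * (if r = v then 1 else 0) = 0 := by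
      rw [← Finset.sum_mul, hs, zero_mul]
    rw [ha, hb, sub_zero]
  · intro e
    rw [incP]
    rw [Finset.sum_comm]
    rw [sub_eq_zero]
    apply Finset.sum_congr rfl
    intro t _
    rw [← Finset.mul_sum]
    congr 1
    split_ifs
    · rw [← Nat.cast_sum, sum_cntP (hW t)]
    · rw [← Nat.cast_sum, sum_cntN (hW t)]
  · intro e
    rw [incM]
    rw [Finset.sum_comm]
    rw [sub_eq_zero]
    apply Finset.sum_congr rfl
    intro t _
    rw [← Finset.mul_sum]
    congr 1
    split_ifs
    · rw [← Nat.cast_sum, sum_cntN (hW t)]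
    · rw [← Nat.cast_sum, sum_cntP (hW t)]

end
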